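/- Let T be an injective analytic operator with the wandering subspace property, and let M := closed span of ⋃_{w ∈ bpe(T)} E_w*(ker T*). Then either M = H or M⊥ is infinite dimensional. -/

import Mathlib

open ContinuousLinearMap Submodule Filter
open scoped InnerProductSpace

noncomputable section

variable {H : Type*} [NormedAddCommGroup H] [InnerProductSpace ℂ H] [CompleteSpace H]

/-- The wandering subspace `ker T*`. -/
def kerAdj (T : H →L[ℂ] H) : Submodule ℂ H := LinearMap.ker (ContinuousLinearMap.adjoint T : H →ₗ[ℂ] H)

/-- `T` has the wandering subspace property: the closed linear span of
`⋃ₙ Tⁿ(ker T*)` is all of `H`. -/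
def WSP (T : H →L[ℂ] H) : Prop :=
  (⨆ n : ℕ, (kerAdj T).map ((T ^ n : H →L[ℂ] H) : H →ₗ[ℂ] H)).topologicalClosure = ⊤

/-- `w` is a bounded point evaluation for `T`: `‖p(w)‖ ≤ c ‖p(T)‖` for all
`ker T*`-valued polynomials `p`, where `p(T) = Σ Tⁿ xₙ` for `p(z) = Σ xₙ zⁿ`. -/
def IsBPE (T : H →L[ℂ] H) (w : ℂ) : Prop :=
  ∃ c > (0 : ℝ), ∀ (k : ℕ) (x : ℕ → H), (∀ n, x n ∈ kerAdj T) →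
    ‖∑ n ∈ Finset.range (k + 1), w ^ n • x n‖ ≤
      c * ‖∑ n ∈ Finset.range (k + 1), (T ^ n) (x n)‖

/-- `E` is the (continuous extension of the) evaluation operator at `w`:
it takes values in `ker T*` and sends `p(T)` to `p(w)`. -/
def IsEval (T : H →L[ℂ] H) (w : ℂ) (E : H →L[ℂ] H) : Prop :=
  (∀ y, E y ∈ kerAdj T) ∧
    ∀ (k : ℕ) (x : ℕ → H), (∀ n, x n ∈ kerAdj T) →
      E (∑ n ∈ Finset.range (k + 1), (T ^ n) (x n)) =
        ∑ n ∈ Finset.range (k + 1), w ^ n • x n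

lemma eval_pow {T : H →L[ℂ] H} {w : ℂ} {E' : H →L[ℂ] H} (hw : IsEval T w E')
    {x : H} (hx : x ∈ kerAdj T) (n : ℕ) : E' ((T ^ n) x) = w ^ n • x := by
  have h := hw.2 n (fun j => if j = n then x else 0) (fun j => by
    by_cases hj : j = n <;> simp [hj, hx, (kerAdj T).zero_mem])
  simpa [apply_ite, Finset.sum_ite_eq', smul_ite] using h

lemma eval_comm {T : H →L[ℂ] H} {w : ℂ} {E' : H →L[ℂ] H} (hT : WSP T)
    (hw : IsEval T w E') (y : H) : E' (T y) = w • E' y := by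
  set D : H →L[ℂ] H := E'.comp T - w • E' with hD
  have hker : (⨆ n : ℕ, (kerAdj T).map ((T ^ n : H →L[ℂ] H) : H →ₗ[ℂ] H)) ≤ LinearMap.ker (D : H →ₗ[ℂ] H) := by
    refine iSup_le fun n => ?_
    rintro _ ⟨x, hx, rfl⟩
    have h1 : E' (T ((T ^ n) x)) = w ^ (n + 1) • x := by
      have h := eval_pow hw hx (n + 1)
      rwa [pow_succ', ContinuousLinearMap.mul_apply] at h
    have h2 : E' ((T ^ n) x) = w ^ n • x := eval_pow hw hx n
    simp only [LinearMap.mem_ker, ContinuousLinearMap.coe_coe, hD, ContinuousLinearMap.coe_sub', Pi.sub_apply,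
      ContinuousLinearMap.comp_apply, ContinuousLinearMap.smul_apply, h1, h2,
      smul_smul, ← pow_succ']
    simp [pow_succ']
  have htop : (⊤ : Submodule ℂ H) ≤ LinearMap.ker (D : H →ₗ[ℂ] H) := by
    rw [← hT]
    exact Submodule.topologicalClosure_minimal _ hker (ContinuousLinearMap.isClosed_ker D)
  have := htop (Submodule.mem_top (x := y))
  simp only [LinearMap.mem_ker, ContinuousLinearMap.coe_coe, hD, ContinuousLinearMap.coe_sub', Pi.sub_apply,
    ContinuousLinearMap.comp_apply, ContinuousLinearMap.smul_apply, sub_eq_zero] at this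
  exact this

/-- for injective analytic `T`, either `M = H` or `M⊥` is infinite dimensional. -/
theorem stmt_15 [TopologicalSpace.SeparableSpace H] (T : H →L[ℂ] H) (hT : WSP T)
    (hinj : Function.Injective T)
    (han : (⨅ n : ℕ, LinearMap.range ((T ^ n : H →L[ℂ] H) : H →ₗ[ℂ] H)) = ⊥)
    (E : ℂ → (H →L[ℂ] H)) (hE : ∀ w : ℂ, IsBPE T w → IsEval T w (E w))
    (M : Submodule ℂ H)
    (hM : M = (⨆ w ∈ {w : ℂ | IsBPE T w},
      (kerAdj T).map (ContinuousLinearMap.adjoint (E w) : H →ₗ[ℂ] H)).topologicalClosure) :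
    M = ⊤ ∨ ¬ FiniteDimensional ℂ ↥(Mᗮ) := by
  classical
  set N : Submodule ℂ H := ⨆ w ∈ {w : ℂ | IsBPE T w},
      (kerAdj T).map (ContinuousLinearMap.adjoint (E w) : H →ₗ[ℂ] H) with hN
  have hNM : N ≤ M := hM ▸ Submodule.le_topologicalClosure N
  have hadjmem : ∀ w : ℂ, IsBPE T w → ∀ x ∈ kerAdj T,
      (ContinuousLinearMap.adjoint (E w)) x ∈ M := by
    intro w hw x hx
    apply hNM
    exact Submodule.mem_iSup_of_mem w (Submodule.mem_iSup_of_mem hw ⟨x, hx, rfl⟩)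
  have hEzero : ∀ y ∈ Mᗮ, ∀ w : ℂ, IsBPE T w → E w y = 0 := by
    intro y hy w hw
    have h0 : ⟪(E w) y, (E w) y⟫_ℂ = 0 := by
      have h1 := (Submodule.mem_orthogonal M y).mp hy _ (hadjmem w hw _ ((hE w hw).1 y))
      rwa [ContinuousLinearMap.adjoint_inner_left] at h1
    exact inner_self_eq_zero.mp h0
  have hTinv : ∀ y ∈ Mᗮ, T y ∈ Mᗮ := by
    intro y hy
    rw [Submodule.mem_orthogonal']
    intro u hu
    have hMK : M ≤ LinearMap.ker ((innerSL ℂ (T y)) : H →ₗ[ℂ] ℂ) := by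
      rw [hM]
      refine Submodule.topologicalClosure_minimal _ ?_
        (ContinuousLinearMap.isClosed_ker (innerSL ℂ (T y)))
      refine iSup₂_le fun w hw => ?_
      rintro _ ⟨x, hx, rfl⟩
      simp only [LinearMap.mem_ker, ContinuousLinearMap.coe_coe, innerSL_apply_apply]
      rw [ContinuousLinearMap.adjoint_inner_right, eval_comm hT (hE w hw) y,
        hEzero y hy w hw, smul_zero, inner_zero_left]
    simpa using hMK hu
  by_cases hfd : FiniteDimensional ℂ ↥(Mᗮ)
  · left
    let f : ↥(Mᗮ) →ₗ[ℂ] ↥(Mᗮ) := (T : H →ₗ[ℂ] H).restrict hTinv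
    have hfinj : Function.Injective f := by
      intro a b hab
      have : T a = T b := congrArg Subtype.val hab
      exact Subtype.ext (hinj this)
    have hfsurj : Function.Surjective f :=
      (LinearMap.injective_iff_surjective).mp hfinj
    have key : ∀ n : ℕ, ∀ y ∈ Mᗮ, ∃ z, (T ^ n) z = y := by
      intro n
      induction n with
      | zero => intro y hy; exact ⟨y, by simp⟩
      | succ n ih =>
        intro y hy
        obtain ⟨z', hz'⟩ := hfsurj ⟨y, hy⟩
        have hz'' : T (z' : H) = y := congrArg Subtype.val hz'
        obtain ⟨z, hz⟩ := ih (z' : H) z'.2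
        refine ⟨z, ?_⟩
        rw [pow_succ', ContinuousLinearMap.mul_apply, hz, hz'']
    have hbot : Mᗮ = ⊥ := by
      rw [eq_bot_iff]
      intro y hy
      rw [← han]
      refine (Submodule.mem_iInf _).mpr fun n => ?_
      obtain ⟨z, hz⟩ := key n y hy
      exact ⟨z, hz⟩
    have hMclosed : IsClosed (M : Set H) := hM ▸ N.isClosed_topologicalClosure
    haveI : CompleteSpace M := hMclosed.completeSpace_coe
    exact Submodule.orthogonal_eq_bot_iff.mp hbot
  · exact Or.inr hfd
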